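/- Let ν > 0 and k > 0. There exist constants C > 0 and θ > 0 depending only on ν (not on k) such that any solution (a, v) : [0, ∞) → ℝ² of a'(t) = k v(t), v'(t) = −νk v(t) − k a(t) satisfies |a(t)| + |v(t)| ≤ C e^{−θ k t} (|a(0)| + |v(0)|) for all t ≥ 0. -/

import Mathlib

set_option maxHeartbeats 1600000

theorem linearized_system_uniform_decay (ν : ℝ) (hν : 0 < ν) :
    ∃ C : ℝ, 0 < C ∧ ∃ θ : ℝ, 0 < θ ∧
      ∀ k : ℝ, 0 < k → ∀ a v : ℝ → ℝ,
        (∀ t : ℝ, 0 ≤ t → HasDerivWithinAt a (k * v t) (Set.Ici 0) t) →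
        (∀ t : ℝ, 0 ≤ t →
          HasDerivWithinAt v (-ν * k * v t - k * a t) (Set.Ici 0) t) →
        ∀ t : ℝ, 0 ≤ t →
          |a t| + |v t| ≤ C * Real.exp (-θ * k * t) * (|a 0| + |v 0|) := by
  set ε : ℝ := ν / (1 + ν ^ 2) with hεdef
  have hν2 : (0:ℝ) < 1 + ν ^ 2 := by positivity
  have hε0 : 0 < ε := by positivity
  have hεν : ε ≤ ν := by
    rw [hεdef, div_le_iff₀ hν2]
    nlinarith [sq_nonneg ν]
  have hε1 : ε ≤ 1 / 2 := by
    rw [hεdef, div_le_div_iff₀ hν2 (by norm_num : (0:ℝ) < 2)]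
    nlinarith [sq_nonneg (ν - 1)]
  have hεsmall : ε * (1 + ν ^ 2) ≤ ν := by
    rw [hεdef, div_mul_cancel₀ _ (ne_of_gt hν2)]
  refine ⟨3, by norm_num, ε / 8, by positivity, ?_⟩
  intro k hk a v ha hv t ht
  -- Lyapunov function
  set L : ℝ → ℝ := fun s => a s ^ 2 + v s ^ 2 + ε * (a s * v s) with hLdef
  set L' : ℝ → ℝ := fun s =>
    2 * a s * (k * v s) + 2 * v s * (-ν * k * v s - k * a s)
      + ε * ((k * v s) * v s + a s * (-ν * k * v s - k * a s)) with hL'def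
  have hLderiv : ∀ s : ℝ, 0 ≤ s → HasDerivWithinAt L (L' s) (Set.Ici 0) s := by
    intro s hs
    have h1 := ha s hs
    have h2 := hv s hs
    have := (((h1.mul h1).add (h2.mul h2)).add
      ((hasDerivWithinAt_const s (Set.Ici 0) ε).mul (h1.mul h2)))
    convert this using 1 <;> [rfl; rfl; funext x; skip] <;> simp [hLdef, hL'def] <;> ring
  -- bound L' ≤ K * L
  have hbound : ∀ s : ℝ, 0 ≤ s → L' s ≤ (-(ε / 4) * k) * L s + 0 := by
    intro s hs
    have hA := sq_nonneg (a s)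
    have hV := sq_nonneg (v s)
    have hAV := sq_nonneg (a s + ν * v s)
    have hAV2 := sq_nonneg (a s + v s)
    have hAV3 := sq_nonneg (a s - v s)
    have key : (ε / 4) * (a s ^ 2 + v s ^ 2 + ε * (a s * v s)) ≤
        ε * (a s) ^ 2 + ε * ν * (a s * v s) + (2 * ν - ε) * (v s) ^ 2 := by
      nlinarith [mul_nonneg hε0.le hAV, mul_nonneg hε0.le hAV2,
        mul_nonneg hε0.le hAV3, mul_nonneg (mul_nonneg hε0.le hε0.le) hAV2,
        mul_nonneg (mul_nonneg hε0.le hε0.le) hAV3, sq_nonneg ν,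
        mul_nonneg hε0.le hV, mul_nonneg hε0.le hA]
    have expand : L' s = -k * (ε * (a s) ^ 2 + ε * ν * (a s * v s)
        + (2 * ν - ε) * (v s) ^ 2) := by
      simp only [hL'def]; ring
    rw [expand, add_zero]
    have := mul_le_mul_of_nonneg_left key hk.le
    simp only [hLdef]
    nlinarith
  -- continuity
  have hLcont : ContinuousOn L (Set.Icc 0 t) := by
    have hcOn : ContinuousOn L (Set.Ici 0) := fun s hs =>
      (hLderiv s hs).continuousWithinAt
    exact hcOn.mono (Set.Icc_subset_Ici_self)
  -- Gronwall
  have hgron := le_gronwallBound_of_liminf_deriv_right_le (f := L) (f' := L')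
    (δ := L 0) (K := -(ε / 4) * k) (ε := 0) (a := 0) (b := t) hLcont
    (fun x hx r hr => by
      have hx0 : (0:ℝ) ≤ x := hx.1
      exact ((hLderiv x hx0).mono (Set.Ici_subset_Ici.2 hx0)).liminf_right_slope_le hr)
    le_rfl
    (fun x hx => hbound x hx.1)
    t ⟨ht, le_rfl⟩
  rw [sub_zero, gronwallBound_ε0] at hgron
  -- Translate back
  have hL_lb : ∀ s : ℝ, a s ^ 2 + v s ^ 2 ≤ 2 * L s := by
    intro s
    simp only [hLdef]
    nlinarith [sq_nonneg (a s + v s), sq_nonneg (a s - v s), sq_nonneg (a s), sq_nonneg (v s)]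
  have hL_ub : L 0 ≤ 2 * (|a 0| + |v 0|) ^ 2 := by
    simp only [hLdef]
    nlinarith [sq_nonneg (a 0 + v 0), sq_nonneg (a 0 - v 0), abs_nonneg (a 0),
      abs_nonneg (v 0), mul_nonneg (abs_nonneg (a 0)) (abs_nonneg (v 0)),
      sq_abs (a 0), sq_abs (v 0)]
  have hexp : Real.exp (-(ε / 4) * k * t) = Real.exp (-(ε / 8) * k * t) ^ 2 := by
    rw [sq, ← Real.exp_add]; congr 1; ring
  have hsq : (|a t| + |v t|) ^ 2 ≤ (3 * Real.exp (-(ε / 8) * k * t) * (|a 0| + |v 0|)) ^ 2 := by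
    have h1 : (|a t| + |v t|) ^ 2 ≤ 2 * (a t ^ 2 + v t ^ 2) := by
      nlinarith [sq_nonneg (|a t| - |v t|), sq_abs (a t), sq_abs (v t)]
    have h2 : a t ^ 2 + v t ^ 2 ≤ 2 * L t := hL_lb t
    have hE : (0:ℝ) < Real.exp (-(ε / 4) * k * t) := Real.exp_pos _
    have h3 : L t ≤ L 0 * Real.exp (-(ε / 4) * k * t) := hgron
    have h4 : L 0 * Real.exp (-(ε / 4) * k * t) ≤
        2 * (|a 0| + |v 0|) ^ 2 * Real.exp (-(ε / 4) * k * t) :=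
      mul_le_mul_of_nonneg_right hL_ub hE.le
    calc (|a t| + |v t|) ^ 2 ≤ 4 * L t := by linarith
      _ ≤ 8 * (|a 0| + |v 0|) ^ 2 * Real.exp (-(ε / 4) * k * t) := by nlinarith
      _ ≤ (3 * Real.exp (-(ε / 8) * k * t) * (|a 0| + |v 0|)) ^ 2 := by
          rw [hexp]; nlinarith [Real.exp_pos (-(ε / 8) * k * t), sq_nonneg (|a 0| + |v 0|),
            abs_nonneg (a 0), abs_nonneg (v 0)]
  have hnn1 : (0:ℝ) ≤ |a t| + |v t| := by positivity
  have hnn2 : (0:ℝ) ≤ 3 * Real.exp (-(ε / 8) * k * t) * (|a 0| + |v 0|) := by positivity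
  exact (pow_le_pow_iff_left₀ hnn1 hnn2 (by norm_num)).1 hsq
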